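/- Completeness of the infeasibility detection for a single handler: with the concrete and abstract semantics of the previous context, a word w over {register, emit, invoke, skip} is valid in the concrete state machine (starting from S) if and only if the abstract composed micro-function applied to S is not X. -/

import Mathlib

inductive EState | X | S | R | E
  deriving DecidableEq

instance : Fintype EState :=
  ⟨{.X, .S, .R, .E}, fun x => by cases x <;> simp⟩

def EState.toNat : EState → ℕ
  | .E => 0 | .R => 1 | .S => 2 | .X => 3

instance : LinearOrder EState :=
  LinearOrder.lift' EState.toNat (by decide)

inductive Op | register | emit | invoke | skip
  deriving DecidableEq

/-- Abstract micro-function semantics of a single operation. -/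
def astep : EState → Op → EState
  | .X, _ => .X
  | .S, .register => .R
  | .S, .emit => .S
  | .S, .invoke => .X
  | .S, .skip => .S
  | .R, .register => .R
  | .R, .emit => .E
  | .R, .invoke => .X
  | .R, .skip => .R
  | .E, _ => .E

/-- Abstract run: compose the micro-functions along the word. -/
def arun (l : EState) : List Op → EState
  | [] => l
  | op :: w => arun (astep l op) w

inductive CState | S | R | E
  deriving DecidableEq

/-- Concrete partial transition: `invoke` is undefined from `S` and `R`. -/
def cstep : CState → Op → Option CState
  | .S, .register => some .R
  | .S, .emit => some .S
  | .S, .invoke => none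
  | .S, .skip => some .S
  | .R, .register => some .R
  | .R, .emit => some .E
  | .R, .invoke => none
  | .R, .skip => some .R
  | .E, _ => some .E

/-- Concrete run: defined only if every step is defined. -/
def crun (q : CState) : List Op → Option CState
  | [] => some q
  | op :: w => (cstep q op).bind (fun q' => crun q' w)

/-- Embedding of concrete states into the abstract lattice. -/
def ι : CState → EState
  | .S => .S | .R => .R | .E => .E

lemma arunX : ∀ w : List Op, arun EState.X w = EState.X := by
  intro w; induction w with
  | nil => rfl
  | cons op w ih => simpa [arun, astep] using ih

lemma key : ∀ (w : List Op) (q : CState),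
    (∃ q', crun q w = some q') ↔ arun (ι q) w ≠ EState.X := by
  intro w
  induction w with
  | nil => intro q; cases q <;> simp [crun, arun, ι]
  | cons op w ih =>
    intro q
    cases q <;> cases op <;>
      simp [crun, arun, astep, ι, cstep, ih, arunX]

theorem stmt_17 (w : List Op) :
    (∃ q, crun CState.S w = some q) ↔ arun EState.S w ≠ EState.X := key w CState.S
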